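/- Let δ be an algebraic integer of degree 2, a, b integers, p a prime with p ∣ b, p ∤ a, t = v_p(b), k a positive integer with ℓ = v_p(k), and write (a + bδ)^k = a_k + b_k δ. Assume p is odd, or p = 2 and t ≥ 2, or ℓ = 0. Then v_p(b_k) = ℓ + t. -/

import Mathlib

/-- Coefficients of `δ ^ n` in the basis `{1, δ}`. -/
def stmt9Dseq (u v : ℤ) : ℕ → ℤ × ℤ
  | 0 => (1, 0)
  | n + 1 => ((stmt9Dseq u v n).2 * u, (stmt9Dseq u v n).1 + (stmt9Dseq u v n).2 * v)

lemma stmt9_three_pow (s : ℕ) (hs : 1 ≤ s) : s + 2 ≤ 3 ^ s := by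
  induction s with
  | zero => omega
  | succ n ih =>
    rcases Nat.eq_zero_or_pos n with h | h
    · subst h; norm_num
    · have := ih h
      have : 3 ^ n ≥ 1 := Nat.one_le_pow _ _ (by norm_num)
      rw [pow_succ]
      omega

lemma stmt9_ineq (p t ℓ i s : ℕ) (hi : 2 ≤ i) (ht : 1 ≤ t) (hs : p ^ s ≤ i)
    (hcase : 3 ≤ p ∨ (p = 2 ∧ 2 ≤ t) ∨ ℓ = 0) :
    min s ℓ + t + 1 ≤ i * t := by
  have hmin : min s ℓ ≤ s := Nat.min_le_left _ _
  rcases hcase with h3 | ⟨hp2, ht2⟩ | hl0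
  · -- p ≥ 3
    rcases Nat.eq_zero_or_pos s with h0 | h1
    · have : min s ℓ = 0 := by omega
      nlinarith
    · have h3s : s + 2 ≤ 3 ^ s := stmt9_three_pow s h1
      have : 3 ^ s ≤ p ^ s := Nat.pow_le_pow_left h3 s
      have hsi : s + 2 ≤ i := by omega
      -- need min + t + 1 ≤ i*t with min ≤ s ≤ i - 2
      nlinarith
  · -- p = 2, t ≥ 2
    have h2s : s < 2 ^ s := Nat.lt_two_pow_self
    have hsi : s + 1 ≤ i := by
      subst hp2; omega
    nlinarith
  · -- ℓ = 0
    have : min s ℓ = 0 := by omega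
    nlinarith

theorem stmt_9 {R : Type*} [CommRing R] (δ : R) (u v : ℤ)
    (h2 : δ ^ 2 = (u : R) + (v : R) * δ)
    (hindep : ∀ m n m_ n_ : ℤ, (m : R) + (n : R) * δ = (m_ : R) + (n_ : R) * δ → m = m_ ∧ n = n_)
    (a b : ℤ) (p : ℕ) (hp : p.Prime) (hpb : (p : ℤ) ∣ b) (hpa : ¬ (p : ℤ) ∣ a) (hb : b ≠ 0)
    (t : ℕ) (ht : t = padicValInt p b)
    (k : ℕ) (hk : 0 < k) (ℓ : ℕ) (hℓ : ℓ = padicValNat p k)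
    (a_k b_k : ℤ) (hpow : ((a : R) + (b : R) * δ) ^ k = (a_k : R) + (b_k : R) * δ)
    (hcase : Odd p ∨ (p = 2 ∧ 2 ≤ t) ∨ ℓ = 0) :
    padicValInt p b_k = ℓ + t := by
  haveI : Fact p.Prime := ⟨hp⟩
  have hpInt : Prime (p : ℤ) := Nat.prime_iff_prime_int.mp hp
  -- δ ^ n in basis form
  have hδ : ∀ n : ℕ, δ ^ n = ((stmt9Dseq u v n).1 : R) + ((stmt9Dseq u v n).2 : R) * δ := by
    intro n
    induction n with
    | zero => simp [stmt9Dseq]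
    | succ n ih =>
      have : δ ^ (n + 1) = ((stmt9Dseq u v n).1 : R) * δ + ((stmt9Dseq u v n).2 : R) * δ ^ 2 := by
        rw [pow_succ, ih]; ring
      rw [this, h2]
      show _ = ((stmt9Dseq u v (n+1)).1 : R) + ((stmt9Dseq u v (n+1)).2 : R) * δ
      simp only [stmt9Dseq]
      push_cast
      ring
  -- binomial expansion
  set S : ℤ := ∑ i ∈ Finset.range (k + 1),
      (k.choose i : ℤ) * a ^ (k - i) * b ^ i * (stmt9Dseq u v i).2 with hS
  set C : ℤ := ∑ i ∈ Finset.range (k + 1),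
      (k.choose i : ℤ) * a ^ (k - i) * b ^ i * (stmt9Dseq u v i).1 with hC
  have hexp : ((a : R) + (b : R) * δ) ^ k = (C : R) + (S : R) * δ := by
    rw [show (a : R) + (b : R) * δ = (b : R) * δ + (a : R) by ring, add_pow]
    rw [hS, hC]
    push_cast
    rw [Finset.sum_mul, ← Finset.sum_add_distrib]
    refine Finset.sum_congr rfl fun i _ => ?_
    rw [mul_pow, hδ i]
    ring
  have hbk : b_k = S := by
    have := hindep a_k b_k C S (by rw [← hpow, hexp])
    exact this.2
  -- basic exact-divisibility facts
  have ht1 : 1 ≤ t := by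
    rw [ht]
    rcases (padicValInt_dvd_iff 1 b).mp (by simpa using hpb) with h | h
    · exact absurd h hb
    · exact h
  have hkdvd : (p : ℤ) ^ ℓ ∣ (k : ℤ) := by
    rw [hℓ]; exact_mod_cast Int.natCast_dvd_natCast.mpr pow_padicValNat_dvd
  have hknot : ¬ (p : ℤ) ^ (ℓ + 1) ∣ (k : ℤ) := by
    rw [hℓ]
    intro h
    exact pow_succ_padicValNat_not_dvd hk.ne' (by exact_mod_cast h)
  have hbdvd : (p : ℤ) ^ t ∣ b := by rw [ht]; exact padicValInt_dvd b
  have hbnot : ¬ (p : ℤ) ^ (t + 1) ∣ b := by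
    rw [ht]
    intro h
    rcases (padicValInt_dvd_iff _ b).mp h with h' | h'
    · exact hb h'
    · omega
  -- the main term k * a^(k-1) * b has valuation exactly ℓ + t
  obtain ⟨k1, hk1⟩ := hkdvd
  obtain ⟨b1, hb1⟩ := hbdvd
  have hpk1 : ¬ (p : ℤ) ∣ k1 := fun ⟨c, hc⟩ =>
    hknot ⟨c, by rw [hk1, hc]; ring⟩
  have hpb1 : ¬ (p : ℤ) ∣ b1 := fun ⟨c, hc⟩ =>
    hbnot ⟨c, by rw [hb1, hc]; ring⟩
  set M : ℤ := (k : ℤ) * a ^ (k - 1) * b with hM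
  have hMeq : M = (p : ℤ) ^ (ℓ + t) * (k1 * a ^ (k - 1) * b1) := by
    rw [hM, hk1, hb1]; ring
  have hMdvd : (p : ℤ) ^ (ℓ + t) ∣ M := ⟨_, hMeq⟩
  have hMnot : ¬ (p : ℤ) ^ (ℓ + t + 1) ∣ M := by
    intro ⟨c, hc⟩
    have hpne : (p : ℤ) ^ (ℓ + t) ≠ 0 := pow_ne_zero _ (by exact_mod_cast hp.ne_zero)
    have : k1 * a ^ (k - 1) * b1 = (p : ℤ) * c := by
      have : (p : ℤ) ^ (ℓ + t) * (k1 * a ^ (k - 1) * b1) = (p : ℤ) ^ (ℓ + t) * ((p : ℤ) * c) := by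
        rw [← hMeq, hc]; ring
      exact mul_left_cancel₀ hpne this
    have hdvd : (p : ℤ) ∣ k1 * a ^ (k - 1) * b1 := ⟨c, this⟩
    rcases hpInt.dvd_mul.mp hdvd with h | h
    · rcases hpInt.dvd_mul.mp h with h | h
      · exact hpk1 h
      · exact hpa (hpInt.dvd_of_dvd_pow h)
    · exact hpb1 h
  -- the error term is divisible by p^(ℓ+t+1)
  have h1mem : 1 ∈ Finset.range (k + 1) := Finset.mem_range.mpr (by omega)
  have hterm1 : (k.choose 1 : ℤ) * a ^ (k - 1) * b ^ 1 * (stmt9Dseq u v 1).2 = M := by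
    simp [stmt9Dseq, hM, Nat.choose_one_right]
  have hEdvd : (p : ℤ) ^ (ℓ + t + 1) ∣ S - M := by
    have hsplit : S - M = ∑ i ∈ (Finset.range (k + 1)).erase 1,
        (k.choose i : ℤ) * a ^ (k - i) * b ^ i * (stmt9Dseq u v i).2 := by
      rw [hS, ← Finset.sum_erase_add _ _ h1mem, hterm1]
      ring
    rw [hsplit]
    refine Finset.dvd_sum fun i hi => ?_
    have hi1 : i ≠ 1 := Finset.ne_of_mem_erase hi
    rcases Nat.eq_zero_or_pos i with h0 | hipos
    · subst h0; simp [stmt9Dseq]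
    have hi2 : 2 ≤ i := by omega
    -- valuation of the binomial coefficient
    set s : ℕ := padicValNat p i with hs
    have hpsi : p ^ s ∣ i := pow_padicValNat_dvd
    have hpsle : p ^ s ≤ i := Nat.le_of_dvd hipos hpsi
    have hik : i ≤ k := by
      have := Finset.mem_range.mp (Finset.mem_of_mem_erase hi)
      omega
    -- p^ℓ ∣ k ∣ choose k i * i
    have hid : k * (k - 1).choose (i - 1) = k.choose i * i := by
      have h := Nat.add_one_mul_choose_eq (k - 1) (i - 1)
      have e1 : k - 1 + 1 = k := by omega
      have e2 : i - 1 + 1 = i := by omega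
      rwa [e1, e2] at h
    have hchoosei : p ^ ℓ ∣ k.choose i * i := hid ▸ Dvd.dvd.mul_right (hℓ ▸ pow_padicValNat_dvd) _
    obtain ⟨i1, hi1eq⟩ := hpsi
    have hpi1 : ¬ p ∣ i1 := by
      intro ⟨c, hc⟩
      have : p ^ (s + 1) ∣ i := ⟨c, by rw [hi1eq, hc, pow_succ]; ring⟩
      exact pow_succ_padicValNat_not_dvd hipos.ne' this
    have hcop : Nat.Coprime (p ^ ℓ) i1 :=
      Nat.Coprime.pow_left _ ((Nat.Prime.coprime_iff_not_dvd hp).mpr hpi1)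
    have hchoose : p ^ ℓ ∣ k.choose i * p ^ s := by
      have : p ^ ℓ ∣ (k.choose i * p ^ s) * i1 := by
        rw [mul_assoc, ← hi1eq]; exact hchoosei
      exact hcop.dvd_of_dvd_mul_right this
    have hchoose' : p ^ (ℓ - s) ∣ k.choose i := by
      rcases le_or_gt s ℓ with hsl | hsl
      · have : p ^ (ℓ - s) * p ^ s ∣ k.choose i * p ^ s := by
          rw [← pow_add, Nat.sub_add_cancel hsl]; exact hchoose
        exact (mul_dvd_mul_iff_right (pow_ne_zero s hp.ne_zero)).mp this
      · simp [Nat.sub_eq_zero_of_le hsl.le]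
    -- case condition in numeric form
    have hcase' : 3 ≤ p ∨ (p = 2 ∧ 2 ≤ t) ∨ ℓ = 0 := by
      rcases hcase with h | h
      · left
        have := hp.two_le
        rcases Nat.lt_or_ge p 3 with h3 | h3
        · interval_cases p
          · exact absurd h (by decide)
        · exact h3
      · right; exact h
    have hkey : ℓ + t + 1 ≤ (ℓ - s) + i * t := by
      have := stmt9_ineq p t ℓ i s hi2 ht1 hpsle hcase'
      omega
    have hd1 : (p : ℤ) ^ (ℓ - s) ∣ (k.choose i : ℤ) := by exact_mod_cast Int.natCast_dvd_natCast.mpr hchoose'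
    have hd2 : (p : ℤ) ^ (i * t) ∣ b ^ i := by
      rw [mul_comm, pow_mul]
      exact pow_dvd_pow_of_dvd ⟨b1, hb1⟩ i
    calc (p : ℤ) ^ (ℓ + t + 1) ∣ (p : ℤ) ^ ((ℓ - s) + i * t) := pow_dvd_pow _ hkey
      _ ∣ (k.choose i : ℤ) * b ^ i := by rw [pow_add]; exact mul_dvd_mul hd1 hd2
      _ ∣ (k.choose i : ℤ) * a ^ (k - i) * b ^ i * (stmt9Dseq u v i).2 :=
        ⟨a ^ (k - i) * (stmt9Dseq u v i).2, by ring⟩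
  -- combine
  have hSdvd : (p : ℤ) ^ (ℓ + t) ∣ S := by
    have : S = (S - M) + M := by ring
    rw [this]
    exact dvd_add ((pow_dvd_pow _ (by omega)).trans hEdvd) hMdvd
  have hSnot : ¬ (p : ℤ) ^ (ℓ + t + 1) ∣ S := by
    intro h
    apply hMnot
    have : M = S - (S - M) := by ring
    rw [this]
    exact dvd_sub h hEdvd
  have hSne : S ≠ 0 := fun h0 => hSnot (h0 ▸ dvd_zero _)
  rw [hbk]
  have h1 := (padicValInt_dvd_iff (ℓ + t) S).mp hSdvd
  have h2' : ¬ (S = 0 ∨ ℓ + t + 1 ≤ padicValInt p S) := by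
    rw [← padicValInt_dvd_iff]; exact hSnot
  push_neg at h2'
  rcases h1 with h | h
  · exact absurd h hSne
  · omega
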